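/- Any binary phylogenetic network can be generated from the single-leaf network by a finite sequence of speciation events, m-type hybrid-speciation events, and extinction events, where each m-type event takes two leaves x, y and replaces them with three leaves x', y', z with z below a new reticulation node whose parents are the new parents of x' and y'. -/

import Mathlib

/-- A (directed) phylogenetic-network-like graph on a finite set of
natural-number labelled vertices. -/
structure PNet where
  verts : Finset ℕ
  adj : ℕ → ℕ → Prop
  adjDec : DecidableRel adj
  adj_mem : ∀ u v, adj u v → u ∈ verts ∧ v ∈ verts

attribute [instance] PNet.adjDec

namespace PNet

/-- In-degree of a vertex. -/
def indeg (N : PNet) (v : ℕ) : ℕ := (N.verts.filter fun u => N.adj u v).card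

/-- Out-degree of a vertex. -/
def outdeg (N : PNet) (v : ℕ) : ℕ := (N.verts.filter fun w => N.adj v w).card

/-- A leaf is a vertex of out-degree 0. -/
def IsLeaf (N : PNet) (v : ℕ) : Prop := v ∈ N.verts ∧ N.outdeg v = 0

/-- A reticulation node is a vertex of in-degree 2. -/
def IsRetic (N : PNet) (v : ℕ) : Prop := v ∈ N.verts ∧ N.indeg v = 2

/-- A root is a vertex of in-degree 0. -/
def IsRoot (N : PNet) (v : ℕ) : Prop := v ∈ N.verts ∧ N.indeg v = 0

/-- The digraph is acyclic. -/
def Acyclic (N : PNet) : Prop := ∀ v, ¬ Relation.TransGen N.adj v v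

/-- A binary (rooted) phylogenetic network: acyclic, a root of in-degree 0 and
out-degree 2 from which all vertices are reachable, and every other vertex is a
tree node (in 1, out 2), a reticulation node (in 2, out 1) or a leaf (in 1, out 0). -/
def IsBinary (N : PNet) : Prop :=
  N.Acyclic ∧ ∃ ρ, N.IsRoot ρ ∧ N.outdeg ρ = 2 ∧
    (∀ v ∈ N.verts, Relation.ReflTransGen N.adj ρ v) ∧
    (∀ v ∈ N.verts, v ≠ ρ →
      (N.indeg v = 1 ∧ N.outdeg v = 2) ∨ (N.indeg v = 2 ∧ N.outdeg v = 1) ∨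
      (N.indeg v = 1 ∧ N.outdeg v = 0))

/-- Tree-child: every internal node has a child that is not a reticulation. -/
def TreeChild (N : PNet) : Prop :=
  ∀ v ∈ N.verts, N.outdeg v ≠ 0 → ∃ c, N.adj v c ∧ N.indeg c ≠ 2

/-- Stack-free: no edge joins two reticulation nodes. -/
def StackFree (N : PNet) : Prop :=
  ∀ u v, N.adj u v → ¬ (N.indeg u = 2 ∧ N.indeg v = 2)

end PNet

namespace PNet

/-- The network consisting of a single leaf (one vertex, no edges). -/
def SingleLeaf (N : PNet) : Prop := ∃ v, N.verts = {v} ∧ ∀ u w, ¬ N.adj u w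

/-- Speciation event: a leaf `x` is replaced by a tree node with two new leaf
children `a` and `b`. -/
def Speciation (N N' : PNet) : Prop :=
  ∃ x a b, N.IsLeaf x ∧ a ∉ N.verts ∧ b ∉ N.verts ∧ a ≠ b ∧
    N'.verts = insert a (insert b N.verts) ∧
    ∀ u v, N'.adj u v ↔ (N.adj u v ∨ (u = x ∧ v = a) ∨ (u = x ∧ v = b))

/-- y-type merging event: two distinct leaves `x` and `y` (with distinct
parents) are glued into a reticulation node with in-edges from the former
parents of `x` and `y` and a single new leaf child `z`. -/
def YMerge (N N' : PNet) : Prop :=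
  ∃ x y z px py, x ≠ y ∧ N.IsLeaf x ∧ N.IsLeaf y ∧ z ∉ N.verts ∧
    N.adj px x ∧ N.adj py y ∧ px ≠ py ∧
    N'.verts = insert z (N.verts \ {y}) ∧
    ∀ u v, N'.adj u v ↔
      ((N.adj u v ∧ v ≠ y) ∨ (u = py ∧ v = x) ∨ (u = x ∧ v = z))

/-- n-type (HGT) reticulation event: subdivide the pendant edges above two
distinct leaves `x` and `y` with new nodes `u₀` and `v₀` and add the arc
`(u₀, v₀)`, making `v₀` a reticulation node; `x` and `y` remain leaves. -/
def HGT (N N' : PNet) : Prop :=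
  ∃ x y u₀ v₀ px py, x ≠ y ∧ N.IsLeaf x ∧ N.IsLeaf y ∧
    N.adj px x ∧ N.adj py y ∧
    u₀ ∉ N.verts ∧ v₀ ∉ N.verts ∧ u₀ ≠ v₀ ∧
    N'.verts = insert u₀ (insert v₀ N.verts) ∧
    ∀ a b, N'.adj a b ↔
      ((N.adj a b ∧ b ≠ x ∧ b ≠ y) ∨ (a = px ∧ b = u₀) ∨ (a = py ∧ b = v₀) ∨
        (a = u₀ ∧ b = x) ∨ (a = v₀ ∧ b = y) ∨ (a = u₀ ∧ b = v₀))

/-- m-type hybrid-speciation event: two distinct leaves `x` and `y` each become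
tree nodes, with new leaf children `x'` resp. `y'` and with edges into a shared
new reticulation node `w`, which has a single new leaf child `z`. -/
def MType (N N' : PNet) : Prop :=
  ∃ x y x' y' w z, x ≠ y ∧ N.IsLeaf x ∧ N.IsLeaf y ∧
    x' ∉ N.verts ∧ y' ∉ N.verts ∧ w ∉ N.verts ∧ z ∉ N.verts ∧
    x' ≠ y' ∧ x' ≠ w ∧ x' ≠ z ∧ y' ≠ w ∧ y' ≠ z ∧ w ≠ z ∧
    N'.verts = insert x' (insert y' (insert w (insert z N.verts))) ∧
    ∀ a b, N'.adj a b ↔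
      (N.adj a b ∨ (a = x ∧ b = x') ∨ (a = x ∧ b = w) ∨
        (a = y ∧ b = y') ∨ (a = y ∧ b = w) ∨ (a = w ∧ b = z))

/-- Extinction event: delete a leaf `x` and suppress its resulting degree-two
parent `p` (when `p` is not the root). -/
def Extinct (N N' : PNet) : Prop :=
  ∃ x p c, N.IsLeaf x ∧ N.adj p x ∧ N.adj p c ∧ c ≠ x ∧
    ((N.indeg p = 0 ∧ N'.verts = N.verts \ {x} ∧
        ∀ u v, N'.adj u v ↔ (N.adj u v ∧ v ≠ x)) ∨
     (∃ q, N.adj q p ∧ N'.verts = N.verts \ {x, p} ∧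
        ∀ u v, N'.adj u v ↔
          ((N.adj u v ∧ u ≠ p ∧ v ≠ p ∧ v ≠ x) ∨ (u = q ∧ v = c))))

/-- Isomorphism of (leaf-unlabelled) network topologies. -/
def Iso (M N : PNet) : Prop :=
  ∃ f : ℕ → ℕ, Set.BijOn f ↑M.verts ↑N.verts ∧
    ∀ u v, u ∈ M.verts → v ∈ M.verts → (M.adj u v ↔ N.adj (f u) (f v))

end PNet


namespace PNet

lemma adj_left {N : PNet} {u v : ℕ} (h : N.adj u v) : u ∈ N.verts := (N.adj_mem u v h).1
lemma adj_right {N : PNet} {u v : ℕ} (h : N.adj u v) : v ∈ N.verts := (N.adj_mem u v h).2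

lemma indeg_eq_zero_iff (N : PNet) (v : ℕ) : N.indeg v = 0 ↔ ∀ u, ¬ N.adj u v := by
  unfold indeg
  rw [Finset.card_eq_zero, Finset.filter_eq_empty_iff]
  exact ⟨fun h u hu => h (adj_left hu) hu, fun h u _ => h u⟩

lemma outdeg_eq_zero_iff (N : PNet) (v : ℕ) : N.outdeg v = 0 ↔ ∀ w, ¬ N.adj v w := by
  unfold outdeg
  rw [Finset.card_eq_zero, Finset.filter_eq_empty_iff]
  exact ⟨fun h u hu => h (adj_right hu) hu, fun h u _ => h u⟩

lemma indeg_eq_one_iff (N : PNet) (v : ℕ) :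
    N.indeg v = 1 ↔ ∃ u, N.adj u v ∧ ∀ w, N.adj w v → w = u := by
  unfold indeg
  rw [Finset.card_eq_one]
  constructor
  · rintro ⟨u, hu⟩
    have hmem : u ∈ N.verts.filter fun u => N.adj u v := hu ▸ Finset.mem_singleton_self u
    rw [Finset.mem_filter] at hmem
    refine ⟨u, hmem.2, fun w hw => ?_⟩
    have : w ∈ N.verts.filter fun u => N.adj u v := Finset.mem_filter.2 ⟨adj_left hw, hw⟩
    rw [hu, Finset.mem_singleton] at this; exact this
  · rintro ⟨u, hu, huniq⟩
    refine ⟨u, ?_⟩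
    ext w
    simp only [Finset.mem_filter, Finset.mem_singleton]
    exact ⟨fun h => huniq w h.2, fun h => h ▸ ⟨adj_left hu, hu⟩⟩

lemma outdeg_eq_one_iff (N : PNet) (v : ℕ) :
    N.outdeg v = 1 ↔ ∃ u, N.adj v u ∧ ∀ w, N.adj v w → w = u := by
  unfold outdeg
  rw [Finset.card_eq_one]
  constructor
  · rintro ⟨u, hu⟩
    have hmem : u ∈ N.verts.filter fun w => N.adj v w := hu ▸ Finset.mem_singleton_self u
    rw [Finset.mem_filter] at hmem
    refine ⟨u, hmem.2, fun w hw => ?_⟩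
    have : w ∈ N.verts.filter fun w => N.adj v w := Finset.mem_filter.2 ⟨adj_right hw, hw⟩
    rw [hu, Finset.mem_singleton] at this; exact this
  · rintro ⟨u, hu, huniq⟩
    refine ⟨u, ?_⟩
    ext w
    simp only [Finset.mem_filter, Finset.mem_singleton]
    exact ⟨fun h => huniq w h.2, fun h => h ▸ ⟨adj_right hu, hu⟩⟩

lemma indeg_eq_two_iff (N : PNet) (v : ℕ) :
    N.indeg v = 2 ↔ ∃ a b, a ≠ b ∧ N.adj a v ∧ N.adj b v ∧
      ∀ w, N.adj w v → w = a ∨ w = b := by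
  unfold indeg
  rw [Finset.card_eq_two]
  constructor
  · rintro ⟨a, b, hab, hs⟩
    have ha : a ∈ N.verts.filter fun u => N.adj u v := by rw [hs]; simp
    have hb : b ∈ N.verts.filter fun u => N.adj u v := by rw [hs]; simp
    rw [Finset.mem_filter] at ha hb
    refine ⟨a, b, hab, ha.2, hb.2, fun w hw => ?_⟩
    have : w ∈ N.verts.filter fun u => N.adj u v := Finset.mem_filter.2 ⟨adj_left hw, hw⟩
    rw [hs] at this; simpa using this
  · rintro ⟨a, b, hab, ha, hb, huniq⟩
    refine ⟨a, b, hab, ?_⟩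
    ext w
    simp only [Finset.mem_filter, Finset.mem_insert, Finset.mem_singleton]
    constructor
    · rintro ⟨-, hw⟩; exact huniq w hw
    · rintro (rfl | rfl)
      exacts [⟨adj_left ha, ha⟩, ⟨adj_left hb, hb⟩]

lemma outdeg_eq_two_iff (N : PNet) (v : ℕ) :
    N.outdeg v = 2 ↔ ∃ a b, a ≠ b ∧ N.adj v a ∧ N.adj v b ∧
      ∀ w, N.adj v w → w = a ∨ w = b := by
  unfold outdeg
  rw [Finset.card_eq_two]
  constructor
  · rintro ⟨a, b, hab, hs⟩
    have ha : a ∈ N.verts.filter fun w => N.adj v w := by rw [hs]; simp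
    have hb : b ∈ N.verts.filter fun w => N.adj v w := by rw [hs]; simp
    rw [Finset.mem_filter] at ha hb
    refine ⟨a, b, hab, ha.2, hb.2, fun w hw => ?_⟩
    have : w ∈ N.verts.filter fun w => N.adj v w := Finset.mem_filter.2 ⟨adj_right hw, hw⟩
    rw [hs] at this; simpa using this
  · rintro ⟨a, b, hab, ha, hb, huniq⟩
    refine ⟨a, b, hab, ?_⟩
    ext w
    simp only [Finset.mem_filter, Finset.mem_insert, Finset.mem_singleton]
    constructor
    · rintro ⟨-, hw⟩; exact huniq w hw
    · rintro (rfl | rfl)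
      exacts [⟨adj_right ha, ha⟩, ⟨adj_right hb, hb⟩]

lemma not_adj_self {N : PNet} (hac : N.Acyclic) {v : ℕ} (h : N.adj v v) : False :=
  hac v (Relation.TransGen.single h)

lemma not_adj_adj {N : PNet} (hac : N.Acyclic) {u v : ℕ} (h1 : N.adj u v)
    (h2 : N.adj v u) : False :=
  hac u (Relation.TransGen.tail (Relation.TransGen.single h1) h2)

lemma fresh (N : PNet) (k : ℕ) (hk : 0 < k) : N.verts.sup id + k ∉ N.verts := by
  intro h
  have := Finset.le_sup (f := id) h
  simp only [id] at this
  omega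

end PNet


set_option maxHeartbeats 2000000 in
open PNet in
theorem gen_aux : ∀ n (N : PNet),
    ((N.verts ×ˢ N.verts).filter fun e => N.adj e.1 e.2).card ≤ n →
    N.IsBinary → ∃ N₀, SingleLeaf N₀ ∧
      Relation.ReflTransGen
        (fun A B => Speciation A B ∨ MType A B ∨ Extinct A B) N₀ N := by
  intro n
  induction n using Nat.strong_induction_on with
  | _ n IH =>
  intro N hcard hbin
  classical
  obtain ⟨hac, ρ, ⟨hρv, hρ0⟩, hρ2, hreach, htype⟩ := hbin
  -- pick a non-leaf vertex all of whose children are leaves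
  set S : Finset ℕ := N.verts.filter (fun v => ¬ N.outdeg v = 0) with hS
  have hρS : ρ ∈ S := by
    rw [hS, Finset.mem_filter]
    exact ⟨hρv, by omega⟩
  have descFin : ∀ a : ℕ, {w | Relation.TransGen N.adj a w}.Finite := by
    intro a
    refine Set.Finite.subset N.verts.finite_toSet ?_
    intro w hw
    obtain ⟨b, -, hb⟩ := Relation.TransGen.tail'_iff.1 hw
    exact adj_right hb
  have hlt : ∀ a b, N.adj a b →
      {w | Relation.TransGen N.adj b w}.ncard < {w | Relation.TransGen N.adj a w}.ncard := by
    intro a b hab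
    refine Set.ncard_lt_ncard ?_ (descFin a)
    constructor
    · intro w hw
      exact Relation.TransGen.head hab hw
    · intro hsub
      exact hac b (hsub (Relation.TransGen.single hab))
  obtain ⟨v, hvS, hvmin⟩ := Finset.exists_min_image S
    (fun a => {w | Relation.TransGen N.adj a w}.ncard) ⟨ρ, hρS⟩
  rw [hS, Finset.mem_filter] at hvS
  obtain ⟨hvverts, hvout⟩ := hvS
  have hchildleaf : ∀ c, N.adj v c → N.outdeg c = 0 := by
    intro c hc
    by_contra hcs
    have hcS : c ∈ S := by
      rw [hS, Finset.mem_filter]; exact ⟨adj_right hc, hcs⟩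
    exact absurd (hlt v c hc) (not_lt.2 (hvmin c hcS))
  by_cases hvρ : v = ρ
  · -- v is the root: N is the cherry
    subst hvρ
    obtain ⟨c1, c2, h12, hc1, hc2, hcex⟩ := (outdeg_eq_two_iff N v).1 hρ2
    have hl1 : ∀ w, ¬ N.adj c1 w := (outdeg_eq_zero_iff N c1).1 (hchildleaf c1 hc1)
    have hl2 : ∀ w, ¬ N.adj c2 w := (outdeg_eq_zero_iff N c2).1 (hchildleaf c2 hc2)
    have hc1v : c1 ≠ v := fun h => not_adj_self hac (h ▸ hc1)
    have hc2v : c2 ≠ v := fun h => not_adj_self hac (h ▸ hc2)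
    have hsub : ∀ w ∈ N.verts, w = v ∨ w = c1 ∨ w = c2 := by
      intro w hw
      rcases (hreach w hw).cases_head with rfl | ⟨c, hc, hcw⟩
      · exact Or.inl rfl
      · have hc' : c = c1 ∨ c = c2 := hcex c hc
        have hcleaf : ∀ u, ¬ N.adj c u :=
          (outdeg_eq_zero_iff N c).1 (hchildleaf c hc)
        rcases hcw.cases_head with rfl | ⟨d, hd, -⟩
        · exact Or.inr hc'
        · exact absurd hd (hcleaf d)
    refine ⟨⟨{v}, fun _ _ => False, fun _ _ => inferInstanceAs (Decidable False),
      fun _ _ h => h.elim⟩, ⟨v, rfl, fun _ _ h => h⟩, ?_⟩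
    refine Relation.ReflTransGen.single (Or.inl ⟨v, c1, c2, ?_, ?_, ?_, h12, ?_, ?_⟩)
    · exact ⟨Finset.mem_singleton_self v, by simp [outdeg]⟩
    · simp [hc1v]
    · simp [hc2v]
    · ext w
      simp only [Finset.mem_insert, Finset.mem_singleton]
      constructor
      · intro hw
        rcases hsub w hw with rfl | rfl | rfl <;> tauto
      · rintro (rfl | rfl | rfl)
        exacts [adj_right hc1, adj_right hc2, hvverts]
    · intro u w
      constructor
      · intro huw
        rcases hsub u (adj_left huw) with rfl | rfl | rfl
        · rcases hcex w huw with rfl | rfl <;> tauto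
        · exact absurd huw (hl1 w)
        · exact absurd huw (hl2 w)
      · rintro (h | ⟨rfl, rfl⟩ | ⟨rfl, rfl⟩)
        · exact h.elim
        · exact hc1
        · exact hc2
  · -- v is not the root
    rcases htype v hvverts hvρ with ⟨hvi, hvo⟩ | ⟨hvi, hvo⟩ | ⟨hvi, hvo⟩

    · -- tree node case: reverse a speciation
      obtain ⟨c1, c2, h12, hc1, hc2, hcex⟩ := (outdeg_eq_two_iff N v).1 hvo
      have hc1leaf : ∀ w, ¬ N.adj c1 w := (outdeg_eq_zero_iff N c1).1 (hchildleaf c1 hc1)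
      have hc2leaf : ∀ w, ¬ N.adj c2 w := (outdeg_eq_zero_iff N c2).1 (hchildleaf c2 hc2)
      have hc1v : c1 ≠ v := fun h => not_adj_self hac (h ▸ hc1)
      have hc2v : c2 ≠ v := fun h => not_adj_self hac (h ▸ hc2)
      have hc1ρ : c1 ≠ ρ := fun h => (indeg_eq_zero_iff N ρ).1 hρ0 v (h ▸ hc1)
      have hc2ρ : c2 ≠ ρ := fun h => (indeg_eq_zero_iff N ρ).1 hρ0 v (h ▸ hc2)
      have hin1 : N.indeg c1 = 1 := by
        have h0 : N.outdeg c1 = 0 := hchildleaf c1 hc1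
        rcases htype c1 (adj_right hc1) hc1ρ with h | h | h <;> omega
      have hin2 : N.indeg c2 = 1 := by
        have h0 : N.outdeg c2 = 0 := hchildleaf c2 hc2
        rcases htype c2 (adj_right hc2) hc2ρ with h | h | h <;> omega
      have hpar1 : ∀ w, N.adj w c1 → w = v := by
        obtain ⟨u, hu, huniq⟩ := (indeg_eq_one_iff N c1).1 hin1
        intro w hw; rw [huniq w hw, ← huniq v hc1]
      have hpar2 : ∀ w, N.adj w c2 → w = v := by
        obtain ⟨u, hu, huniq⟩ := (indeg_eq_one_iff N c2).1 hin2
        intro w hw; rw [huniq w hw, ← huniq v hc2]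
      have hAmem : ∀ u w : ℕ, (N.adj u w ∧ w ≠ c1 ∧ w ≠ c2) →
          u ∈ N.verts \ {c1, c2} ∧ w ∈ N.verts \ {c1, c2} := by
        rintro u w ⟨huw, h1, h2⟩
        have hu1 : u ≠ c1 := fun h => hc1leaf w (h ▸ huw)
        have hu2 : u ≠ c2 := fun h => hc2leaf w (h ▸ huw)
        constructor <;> rw [Finset.mem_sdiff] <;> simp_all [adj_left huw, adj_right huw]
      set A : PNet := ⟨N.verts \ {c1, c2}, fun u w => N.adj u w ∧ w ≠ c1 ∧ w ≠ c2,
        fun u w => instDecidableAnd, hAmem⟩ with hAdef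
      have hAadj : ∀ u w, A.adj u w ↔ (N.adj u w ∧ w ≠ c1 ∧ w ≠ c2) := fun u w => Iff.rfl
      have hAverts : A.verts = N.verts \ {c1, c2} := rfl
      have hAmem' : ∀ w, w ∈ A.verts ↔ (w ∈ N.verts ∧ w ≠ c1 ∧ w ≠ c2) := by
        intro w; rw [hAverts, Finset.mem_sdiff, Finset.mem_insert, Finset.mem_singleton]
        tauto
      have hvA : v ∈ A.verts := (hAmem' v).2 ⟨hvverts, hc1v.symm, hc2v.symm⟩
      have hρA : ρ ∈ A.verts := (hAmem' ρ).2 ⟨hρv, hc1ρ.symm, hc2ρ.symm⟩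
      have hacA : A.Acyclic := fun w h => hac w (Relation.TransGen.mono (fun a b hab => hab.1 : ∀ a b, A.adj a b → N.adj a b) w w h)
      have hinρA : A.indeg ρ = 0 := by
        rw [indeg_eq_zero_iff]
        intro u hu
        exact (indeg_eq_zero_iff N ρ).1 hρ0 u hu.1
      have hineq : ∀ w, w ≠ c1 → w ≠ c2 → A.indeg w = N.indeg w := by
        intro w h1 h2
        unfold indeg
        congr 1
        ext u
        simp only [Finset.mem_filter]
        constructor
        · rintro ⟨-, hadj⟩
          exact ⟨adj_left hadj.1, hadj.1⟩
        · rintro ⟨-, hadj⟩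
          exact ⟨(A.adj_mem u w ⟨hadj, h1, h2⟩).1, hadj, h1, h2⟩
      have houteq : ∀ u, u ≠ v → A.outdeg u = N.outdeg u := by
        intro u hu
        unfold outdeg
        congr 1
        ext b
        simp only [Finset.mem_filter]
        constructor
        · rintro ⟨-, hadj⟩
          exact ⟨adj_right hadj.1, hadj.1⟩
        · rintro ⟨-, hadj⟩
          have h1 : b ≠ c1 := fun h => hu (hpar1 u (h ▸ hadj))
          have h2 : b ≠ c2 := fun h => hu (hpar2 u (h ▸ hadj))
          exact ⟨(A.adj_mem u b ⟨hadj, h1, h2⟩).2, hadj, h1, h2⟩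
      have houtvA : A.outdeg v = 0 := by
        rw [outdeg_eq_zero_iff]
        rintro b ⟨hb, h1, h2⟩
        rcases hcex b hb with rfl | rfl
        · exact h1 rfl
        · exact h2 rfl
      have hreachA : ∀ w, Relation.ReflTransGen N.adj ρ w → w ≠ c1 → w ≠ c2 →
          Relation.ReflTransGen A.adj ρ w := by
        intro w hw
        induction hw with
        | refl => intro _ _; exact Relation.ReflTransGen.refl
        | @tail b w hab hbw ih =>
          intro h1 h2
          have hb1 : b ≠ c1 := fun h => hc1leaf w (h ▸ hbw)
          have hb2 : b ≠ c2 := fun h => hc2leaf w (h ▸ hbw)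
          exact (ih hb1 hb2).tail ⟨hbw, h1, h2⟩
      have hbinA : A.IsBinary := by
        refine ⟨hacA, ρ, ⟨hρA, hinρA⟩, ?_, ?_, ?_⟩
        · rw [houteq ρ (fun h => hvρ h.symm)]; exact hρ2
        · intro w hw
          obtain ⟨hwN, hw1, hw2⟩ := (hAmem' w).1 hw
          exact hreachA w (hreach w hwN) hw1 hw2
        · intro w hw hwρ
          obtain ⟨hwN, hw1, hw2⟩ := (hAmem' w).1 hw
          rw [hineq w hw1 hw2]
          by_cases hwv : w = v
          · subst hwv
            exact Or.inr (Or.inr ⟨hvi, houtvA⟩)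
          · rw [houteq w hwv]
            exact htype w hwN hwρ
      have hedge : ((A.verts ×ˢ A.verts).filter fun e => A.adj e.1 e.2) ⊂
          ((N.verts ×ˢ N.verts).filter fun e => N.adj e.1 e.2) := by
        rw [Finset.ssubset_iff_of_subset]
        · refine ⟨(v, c1), ?_, ?_⟩
          · rw [Finset.mem_filter, Finset.mem_product]
            exact ⟨⟨hvverts, adj_right hc1⟩, hc1⟩
          · rw [Finset.mem_filter]
            rintro ⟨-, hadj, h1, -⟩
            exact h1 rfl
        · intro e he
          rw [Finset.mem_filter, Finset.mem_product] at he ⊢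
          obtain ⟨-, hadj, -, -⟩ := he
          exact ⟨⟨adj_left hadj, adj_right hadj⟩, hadj⟩
      obtain ⟨N₀, h0, hchain⟩ := IH _ (lt_of_lt_of_le (Finset.card_lt_card hedge) hcard)
        A le_rfl hbinA
      refine ⟨N₀, h0, hchain.tail (Or.inl ⟨v, c1, c2, ⟨hvA, houtvA⟩, ?_, ?_, h12, ?_, ?_⟩)⟩
      · rw [hAmem']; tauto
      · rw [hAmem']; tauto
      · ext w
        rw [Finset.mem_insert, Finset.mem_insert, hAmem']
        constructor
        · intro hw
          by_cases h1 : w = c1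
          · tauto
          · by_cases h2 : w = c2 <;> tauto
        · rintro (rfl | rfl | ⟨hw, -, -⟩)
          exacts [adj_right hc1, adj_right hc2, hw]
      · intro u w
        rw [hAadj]
        constructor
        · intro huw
          by_cases h1 : w = c1
          · subst h1; exact Or.inr (Or.inl ⟨hpar1 u huw, rfl⟩)
          · by_cases h2 : w = c2
            · subst h2; exact Or.inr (Or.inr ⟨hpar2 u huw, rfl⟩)
            · exact Or.inl ⟨huw, h1, h2⟩
        · rintro (⟨h, -, -⟩ | ⟨rfl, rfl⟩ | ⟨rfl, rfl⟩)
          exacts [h, hc1, hc2]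

    · -- reticulation case: reverse a y-merge via MType + two extinctions
      obtain ⟨p, q, hpq, hp, hq, hparex⟩ := (indeg_eq_two_iff N v).1 hvi
      obtain ⟨z, hz, hzuniq⟩ := (outdeg_eq_one_iff N v).1 hvo
      have hzleaf : ∀ w, ¬ N.adj z w := (outdeg_eq_zero_iff N z).1 (hchildleaf z hz)
      have hzρ : z ≠ ρ := fun h => (indeg_eq_zero_iff N ρ).1 hρ0 v (h ▸ hz)
      have hzv : z ≠ v := fun h => not_adj_self hac (h ▸ hz)
      have hzin : N.indeg z = 1 := by
        have h0 : N.outdeg z = 0 := hchildleaf z hz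
        rcases htype z (adj_right hz) hzρ with h | h | h <;> omega
      have hzpar : ∀ w, N.adj w z → w = v := by
        obtain ⟨u, hu, huniq⟩ := (indeg_eq_one_iff N z).1 hzin
        intro w hw; rw [huniq w hw, ← huniq v hz]
      have hpv : p ≠ v := fun h => not_adj_self hac (h ▸ hp)
      have hqv : q ≠ v := fun h => not_adj_self hac (h ▸ hq)
      have hpz : p ≠ z := fun h => hzleaf v (h ▸ hp)
      have hqz : q ≠ z := fun h => hzleaf v (h ▸ hq)
      have hpN : p ∈ N.verts := adj_left hp
      have hqN : q ∈ N.verts := adj_left hq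
      have hzN : z ∈ N.verts := adj_right hz
      have hρv' : ρ ≠ v := fun h => hvρ h.symm
      have hρz : ρ ≠ z := fun h => hzρ h.symm
      -- fresh labels
      set m : ℕ := N.verts.sup id with hmdef
      set x : ℕ := m + 1 with hxdef
      set y : ℕ := m + 2 with hydef
      set x' : ℕ := m + 3 with hx'def
      set y' : ℕ := m + 4 with hy'def
      have hxN : x ∉ N.verts := N.fresh 1 one_pos
      have hyN : y ∉ N.verts := N.fresh 2 two_pos
      have hx'N : x' ∉ N.verts := N.fresh 3 (by omega)
      have hy'N : y' ∉ N.verts := N.fresh 4 (by omega)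
      have hfr : ∀ w ∈ N.verts, w ≠ x ∧ w ≠ y ∧ w ≠ x' ∧ w ≠ y' :=
        fun w hw => ⟨fun h => hxN (h ▸ hw), fun h => hyN (h ▸ hw),
          fun h => hx'N (h ▸ hw), fun h => hy'N (h ▸ hw)⟩
      have hxy : x ≠ y := by omega
      have hxx' : x ≠ x' := by omega
      have hxy' : x ≠ y' := by omega
      have hyx' : y ≠ x' := by omega
      have hyy' : y ≠ y' := by omega
      have hx'y' : x' ≠ y' := by omega
      -- the smaller network A
      have hAmem : ∀ a b : ℕ,
          ((N.adj a b ∧ a ≠ v ∧ b ≠ v) ∨ (a = p ∧ b = x) ∨ (a = q ∧ b = y)) →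
          a ∈ insert x (insert y (N.verts \ {v, z})) ∧
            b ∈ insert x (insert y (N.verts \ {v, z})) := by
        rintro a b (⟨h, hav, hbv⟩ | ⟨rfl, rfl⟩ | ⟨rfl, rfl⟩)
        · have haz : a ≠ z := fun hh => hzleaf b (hh ▸ h)
          have hbz : b ≠ z := fun hh => hav (hzpar a (hh ▸ h))
          constructor <;> rw [Finset.mem_insert, Finset.mem_insert, Finset.mem_sdiff]
          · exact Or.inr (Or.inr ⟨adj_left h, by simp [hav, haz]⟩)
          · exact Or.inr (Or.inr ⟨adj_right h, by simp [hbv, hbz]⟩)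
        · constructor <;> rw [Finset.mem_insert, Finset.mem_insert, Finset.mem_sdiff]
          · exact Or.inr (Or.inr ⟨hpN, by simp [hpv, hpz]⟩)
          · exact Or.inl rfl
        · constructor <;> rw [Finset.mem_insert, Finset.mem_insert, Finset.mem_sdiff]
          · exact Or.inr (Or.inr ⟨hqN, by simp [hqv, hqz]⟩)
          · exact Or.inr (Or.inl rfl)
      set A : PNet := ⟨insert x (insert y (N.verts \ {v, z})),
        fun a b => (N.adj a b ∧ a ≠ v ∧ b ≠ v) ∨ (a = p ∧ b = x) ∨ (a = q ∧ b = y),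
        fun a b => instDecidableOr, hAmem⟩ with hAdef
      have hAadj : ∀ a b, A.adj a b ↔
          ((N.adj a b ∧ a ≠ v ∧ b ≠ v) ∨ (a = p ∧ b = x) ∨ (a = q ∧ b = y)) :=
        fun a b => Iff.rfl
      have hAV : ∀ w, w ∈ A.verts ↔
          (w = x ∨ w = y ∨ (w ∈ N.verts ∧ w ≠ v ∧ w ≠ z)) := by
        intro w
        show w ∈ insert x (insert y (N.verts \ {v, z})) ↔ _
        rw [Finset.mem_insert, Finset.mem_insert, Finset.mem_sdiff,
          Finset.mem_insert, Finset.mem_singleton]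
        tauto
      have hxA : x ∈ A.verts := (hAV x).2 (Or.inl rfl)
      have hyA : y ∈ A.verts := (hAV y).2 (Or.inr (Or.inl rfl))
      have hvA : v ∉ A.verts := by
        intro h
        rcases (hAV v).1 h with h1 | h1 | ⟨-, h1, -⟩
        · exact hxN (h1 ▸ hvverts)
        · exact hyN (h1 ▸ hvverts)
        · exact h1 rfl
      have hzA : z ∉ A.verts := by
        intro h
        rcases (hAV z).1 h with h1 | h1 | ⟨-, -, h1⟩
        · exact hxN (h1 ▸ hzN)
        · exact hyN (h1 ▸ hzN)
        · exact h1 rfl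
      have hx'A : x' ∉ A.verts := by
        intro h
        rcases (hAV x').1 h with h1 | h1 | ⟨h1, -, -⟩
        · exact hxx' h1.symm
        · exact hyx' h1.symm
        · exact hx'N h1
      have hy'A : y' ∉ A.verts := by
        intro h
        rcases (hAV y').1 h with h1 | h1 | ⟨h1, -, -⟩
        · exact hxy' h1.symm
        · exact hyy' h1.symm
        · exact hy'N h1
      have houtx : ∀ b, ¬ A.adj x b := by
        rintro b (⟨h, -, -⟩ | ⟨rfl, -⟩ | ⟨rfl, -⟩)
        · exact hxN (adj_left h)
        · exact hxN hpN
        · exact hxN hqN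
      have houty : ∀ b, ¬ A.adj y b := by
        rintro b (⟨h, -, -⟩ | ⟨rfl, -⟩ | ⟨rfl, -⟩)
        · exact hyN (adj_left h)
        · exact hyN hpN
        · exact hyN hqN
      have hleafxA : A.IsLeaf x := ⟨hxA, (outdeg_eq_zero_iff A x).2 houtx⟩
      have hleafyA : A.IsLeaf y := ⟨hyA, (outdeg_eq_zero_iff A y).2 houty⟩
      have hinx : ∀ u, A.adj u x → u = p := by
        rintro u (⟨h, -, -⟩ | ⟨rfl, -⟩ | ⟨-, hh⟩)
        · exact absurd (adj_right h) hxN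
        · rfl
        · exact absurd hh hxy
      have hiny : ∀ u, A.adj u y → u = q := by
        rintro u (⟨h, -, -⟩ | ⟨-, hh⟩ | ⟨rfl, -⟩)
        · exact absurd (adj_right h) hyN
        · exact absurd hh.symm hxy
        · rfl
      have hacA : A.Acyclic := by
        have hsim : ∀ a b, Relation.TransGen A.adj a b →
            (Relation.TransGen N.adj a b ∨ b = x ∨ b = y) := by
          intro a b h
          induction h with
          | single h' =>
            rcases h' with ⟨h, -, -⟩ | ⟨-, rfl⟩ | ⟨-, rfl⟩
            · exact Or.inl (Relation.TransGen.single h)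
            · exact Or.inr (Or.inl rfl)
            · exact Or.inr (Or.inr rfl)
          | @tail b c hab hbc ih =>
            rcases ih with ih | rfl | rfl
            · rcases hbc with ⟨h, -, -⟩ | ⟨-, rfl⟩ | ⟨-, rfl⟩
              · exact Or.inl (ih.tail h)
              · exact Or.inr (Or.inl rfl)
              · exact Or.inr (Or.inr rfl)
            · exact absurd hbc (houtx c)
            · exact absurd hbc (houty c)
        intro w hw
        rcases hsim w w hw with h | rfl | rfl
        · exact hac w h
        · obtain ⟨b, hb, -⟩ := Relation.TransGen.head'_iff.1 hw
          exact houtx b hb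
        · obtain ⟨b, hb, -⟩ := Relation.TransGen.head'_iff.1 hw
          exact houty b hb
      have hρA : ρ ∈ A.verts := (hAV ρ).2 (Or.inr (Or.inr ⟨hρv, hρv', hρz⟩))
      have hinρA : A.indeg ρ = 0 := by
        rw [indeg_eq_zero_iff]
        rintro u (⟨h, -, -⟩ | ⟨-, hh⟩ | ⟨-, hh⟩)
        · exact (indeg_eq_zero_iff N ρ).1 hρ0 u h
        · exact hxN (hh ▸ hρv)
        · exact hyN (hh ▸ hρv)
      have hNreachA : ∀ w, Relation.ReflTransGen N.adj ρ w → w ≠ v → w ≠ z →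
          Relation.ReflTransGen A.adj ρ w := by
        intro w hw
        induction hw with
        | refl => intro _ _; exact Relation.ReflTransGen.refl
        | @tail b w hab hbw ih =>
          intro h1 h2
          have hb1 : b ≠ v := fun h => h2 (hzuniq w (h ▸ hbw))
          have hb2 : b ≠ z := fun h => hzleaf w (h ▸ hbw)
          exact (ih hb1 hb2).tail (Or.inl ⟨hbw, hb1, h1⟩)
      have hreachA : ∀ w ∈ A.verts, Relation.ReflTransGen A.adj ρ w := by
        intro w hw
        rcases (hAV w).1 hw with rfl | rfl | ⟨hwN, hwv, hwz⟩
        · exact (hNreachA p (hreach p hpN) hpv hpz).tail (Or.inr (Or.inl ⟨rfl, rfl⟩))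
        · exact (hNreachA q (hreach q hqN) hqv hqz).tail (Or.inr (Or.inr ⟨rfl, rfl⟩))
        · exact hNreachA w (hreach w hwN) hwv hwz
      have hinA : ∀ w, w ∈ N.verts → w ≠ v → w ≠ z → A.indeg w = N.indeg w := by
        intro w hwN hwv hwz
        unfold indeg
        congr 1
        ext u
        simp only [Finset.mem_filter]
        constructor
        · rintro ⟨-, hadj⟩
          rcases hadj with ⟨h, -, -⟩ | ⟨-, rfl⟩ | ⟨-, rfl⟩
          · exact ⟨adj_left h, h⟩
          · exact absurd hwN hxN
          · exact absurd hwN hyN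
        · rintro ⟨-, hadj⟩
          have huv : u ≠ v := fun h => hwz (hzuniq w (h ▸ hadj))
          have hA : A.adj u w := Or.inl ⟨hadj, huv, hwv⟩
          exact ⟨(A.adj_mem u w hA).1, hA⟩
      have hcharp : ∀ b, A.adj p b ↔ (b = x ∨ (N.adj p b ∧ b ≠ v)) := by
        intro b
        constructor
        · rintro (⟨h, -, hb⟩ | ⟨-, rfl⟩ | ⟨hh, -⟩)
          · exact Or.inr ⟨h, hb⟩
          · exact Or.inl rfl
          · exact absurd hh hpq
        · rintro (rfl | ⟨h, hb⟩)
          · exact Or.inr (Or.inl ⟨rfl, rfl⟩)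
          · exact Or.inl ⟨h, hpv, hb⟩
      have hcharq : ∀ b, A.adj q b ↔ (b = y ∨ (N.adj q b ∧ b ≠ v)) := by
        intro b
        constructor
        · rintro (⟨h, -, hb⟩ | ⟨hh, -⟩ | ⟨-, rfl⟩)
          · exact Or.inr ⟨h, hb⟩
          · exact absurd hh.symm hpq
          · exact Or.inl rfl
        · rintro (rfl | ⟨h, hb⟩)
          · exact Or.inr (Or.inr ⟨rfl, rfl⟩)
          · exact Or.inl ⟨h, hqv, hb⟩
      have hcount : ∀ w t, t ∉ N.verts → N.adj w v →
          (∀ b, A.adj w b ↔ (b = t ∨ (N.adj w b ∧ b ≠ v))) →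
          A.outdeg w = N.outdeg w := by
        intro w t htN hwv hchar
        have hwN : w ∈ N.verts := adj_left hwv
        have houtw : N.outdeg w = 1 ∨ N.outdeg w = 2 := by
          by_cases hwρ : w = ρ
          · exact Or.inr (hwρ ▸ hρ2)
          · rcases htype w hwN hwρ with h | h | h
            · exact Or.inr h.2
            · exact Or.inl h.2
            · exact absurd hwv ((outdeg_eq_zero_iff N w).1 h.2 v)
        rcases houtw with h1 | h2
        · rw [h1, outdeg_eq_one_iff]
          obtain ⟨u, hu, huniq⟩ := (outdeg_eq_one_iff N w).1 h1
          refine ⟨t, (hchar t).2 (Or.inl rfl), ?_⟩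
          intro b hb
          rcases (hchar b).1 hb with rfl | ⟨h, hne⟩
          · rfl
          · exact absurd ((huniq b h).trans (huniq v hwv).symm) hne
        · rw [h2, outdeg_eq_two_iff]
          obtain ⟨a, b, hab, ha, hb, hex⟩ := (outdeg_eq_two_iff N w).1 h2
          rcases hex v hwv with rfl | rfl
          · refine ⟨t, b, fun h => htN (h ▸ adj_right hb),
              (hchar t).2 (Or.inl rfl), (hchar b).2 (Or.inr ⟨hb, Ne.symm hab⟩), ?_⟩
            intro c hc
            rcases (hchar c).1 hc with rfl | ⟨h, hne⟩
            · exact Or.inl rfl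
            · rcases hex c h with rfl | rfl
              · exact absurd rfl hne
              · exact Or.inr rfl
          · refine ⟨t, a, fun h => htN (h ▸ adj_right ha),
              (hchar t).2 (Or.inl rfl), (hchar a).2 (Or.inr ⟨ha, hab⟩), ?_⟩
            intro c hc
            rcases (hchar c).1 hc with rfl | ⟨h, hne⟩
            · exact Or.inl rfl
            · rcases hex c h with rfl | rfl
              · exact Or.inr rfl
              · exact absurd rfl hne
      have houtA : ∀ w, w ∈ N.verts → w ≠ v → w ≠ z → A.outdeg w = N.outdeg w := by
        intro w hwN hwv hwz
        by_cases hwp : w = p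
        · rw [hwp]; exact hcount p x hxN hp hcharp
        · by_cases hwq : w = q
          · rw [hwq]; exact hcount q y hyN hq hcharq
          · unfold outdeg
            congr 1
            ext b
            simp only [Finset.mem_filter]
            constructor
            · rintro ⟨-, hadj⟩
              rcases hadj with ⟨h, -, -⟩ | ⟨rfl, -⟩ | ⟨rfl, -⟩
              · exact ⟨adj_right h, h⟩
              · exact absurd rfl hwp
              · exact absurd rfl hwq
            · rintro ⟨-, hadj⟩
              have hbv : b ≠ v := by
                intro h
                rcases hparex w (h ▸ hadj) with rfl | rfl
                · exact hwp rfl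
                · exact hwq rfl
              have hA : A.adj w b := Or.inl ⟨hadj, hwv, hbv⟩
              exact ⟨(A.adj_mem w b hA).2, hA⟩
      have hbinA : A.IsBinary := by
        refine ⟨hacA, ρ, ⟨hρA, hinρA⟩, ?_, hreachA, ?_⟩
        · rw [houtA ρ hρv hρv' hρz]; exact hρ2
        · intro w hw hwρ
          rcases (hAV w).1 hw with rfl | rfl | ⟨hwN, hwv, hwz⟩
          · refine Or.inr (Or.inr ⟨?_, hleafxA.2⟩)
            rw [indeg_eq_one_iff]
            exact ⟨p, Or.inr (Or.inl ⟨rfl, rfl⟩), hinx⟩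
          · refine Or.inr (Or.inr ⟨?_, hleafyA.2⟩)
            rw [indeg_eq_one_iff]
            exact ⟨q, Or.inr (Or.inr ⟨rfl, rfl⟩), hiny⟩
          · rw [hinA w hwN hwv hwz, houtA w hwN hwv hwz]
            exact htype w hwN hwρ
      -- edge count decreases
      have hTsub : ({(p, v), (q, v), (v, z)} : Finset (ℕ × ℕ)) ⊆
          (N.verts ×ˢ N.verts).filter fun e => N.adj e.1 e.2 := by
        intro e he
        simp only [Finset.mem_insert, Finset.mem_singleton] at he
        rcases he with rfl | rfl | rfl <;>
          rw [Finset.mem_filter, Finset.mem_product]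
        · exact ⟨⟨hpN, hvverts⟩, hp⟩
        · exact ⟨⟨hqN, hvverts⟩, hq⟩
        · exact ⟨⟨hvverts, hzN⟩, hz⟩
      have hTcard : ({(p, v), (q, v), (v, z)} : Finset (ℕ × ℕ)).card = 3 := by
        rw [Finset.card_insert_of_notMem, Finset.card_insert_of_notMem,
          Finset.card_singleton]
        · simp only [Finset.mem_singleton, Prod.mk.injEq, not_and]
          intro h; exact absurd h hqv
        · simp only [Finset.mem_insert, Finset.mem_singleton, Prod.mk.injEq, not_or, not_and]
          exact ⟨fun h _ => hpq h, fun h => absurd h hpv⟩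
      have hEA : ((A.verts ×ˢ A.verts).filter fun e => A.adj e.1 e.2) ⊆
          ((((N.verts ×ˢ N.verts).filter fun e => N.adj e.1 e.2) \
            {(p, v), (q, v), (v, z)}) ∪ {(p, x), (q, y)}) := by
        rintro ⟨a, b⟩ he
        rw [Finset.mem_filter] at he
        obtain ⟨-, hadj⟩ := he
        rw [Finset.mem_union, Finset.mem_sdiff, Finset.mem_filter, Finset.mem_product]
        rcases hadj with ⟨h, hav, hbv⟩ | ⟨rfl, rfl⟩ | ⟨rfl, rfl⟩
        · refine Or.inl ⟨⟨⟨adj_left h, adj_right h⟩, h⟩, ?_⟩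
          simp only [Finset.mem_insert, Finset.mem_singleton, Prod.mk.injEq, not_or, not_and]
          exact ⟨fun _ h2 => hbv h2, fun _ h2 => hbv h2, fun h2 => absurd h2 hav⟩
        · exact Or.inr (by simp)
        · exact Or.inr (by simp)
      have hcardA : ((A.verts ×ˢ A.verts).filter fun e => A.adj e.1 e.2).card <
          ((N.verts ×ˢ N.verts).filter fun e => N.adj e.1 e.2).card := by
        have h1 := Finset.card_le_card hEA
        have h2 : ((((N.verts ×ˢ N.verts).filter fun e => N.adj e.1 e.2) \
            {(p, v), (q, v), (v, z)})).card =
            ((N.verts ×ˢ N.verts).filter fun e => N.adj e.1 e.2).card - 3 := by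
          rw [Finset.card_sdiff_of_subset hTsub, hTcard]
        have h3 : ({(p, x), (q, y)} : Finset (ℕ × ℕ)).card ≤ 2 :=
          (Finset.card_insert_le _ _).trans (by simp)
        have h4 := Finset.card_union_le
          ((((N.verts ×ˢ N.verts).filter fun e => N.adj e.1 e.2) \
            {(p, v), (q, v), (v, z)})) ({(p, x), (q, y)} : Finset (ℕ × ℕ))
        have h5 : 3 ≤ ((N.verts ×ˢ N.verts).filter fun e => N.adj e.1 e.2).card := by
          rw [← hTcard]; exact Finset.card_le_card hTsub
        omega
      obtain ⟨N₀, h0, hchain⟩ := IH _ (lt_of_lt_of_le hcardA hcard) A le_rfl hbinA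
      -- the MType step  A → C
      have hx'C : x' ∈ insert x' (insert y' (insert v (insert z A.verts))) :=
        Finset.mem_insert_self _ _
      have hy'C : y' ∈ insert x' (insert y' (insert v (insert z A.verts))) :=
        Finset.mem_insert_of_mem (Finset.mem_insert_self _ _)
      have hvC : v ∈ insert x' (insert y' (insert v (insert z A.verts))) :=
        Finset.mem_insert_of_mem (Finset.mem_insert_of_mem (Finset.mem_insert_self _ _))
      have hzC : z ∈ insert x' (insert y' (insert v (insert z A.verts))) :=
        Finset.mem_insert_of_mem (Finset.mem_insert_of_mem
          (Finset.mem_insert_of_mem (Finset.mem_insert_self _ _)))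
      have hsubC : ∀ w ∈ A.verts, w ∈ insert x' (insert y' (insert v (insert z A.verts))) :=
        fun w hw => Finset.mem_insert_of_mem (Finset.mem_insert_of_mem
          (Finset.mem_insert_of_mem (Finset.mem_insert_of_mem hw)))
      have hCmem : ∀ a b : ℕ,
          (A.adj a b ∨ (a = x ∧ b = x') ∨ (a = x ∧ b = v) ∨ (a = y ∧ b = y') ∨
            (a = y ∧ b = v) ∨ (a = v ∧ b = z)) →
          a ∈ insert x' (insert y' (insert v (insert z A.verts))) ∧
            b ∈ insert x' (insert y' (insert v (insert z A.verts))) := by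
        rintro a b (h | ⟨rfl, rfl⟩ | ⟨rfl, rfl⟩ | ⟨rfl, rfl⟩ | ⟨rfl, rfl⟩ | ⟨rfl, rfl⟩)
        · exact ⟨hsubC a (A.adj_mem a b h).1, hsubC b (A.adj_mem a b h).2⟩
        · exact ⟨hsubC x hxA, hx'C⟩
        · exact ⟨hsubC x hxA, hvC⟩
        · exact ⟨hsubC y hyA, hy'C⟩
        · exact ⟨hsubC y hyA, hvC⟩
        · exact ⟨hvC, hzC⟩
      set C : PNet := ⟨insert x' (insert y' (insert v (insert z A.verts))),
        fun a b => A.adj a b ∨ (a = x ∧ b = x') ∨ (a = x ∧ b = v) ∨ (a = y ∧ b = y') ∨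
          (a = y ∧ b = v) ∨ (a = v ∧ b = z),
        fun a b => instDecidableOr, hCmem⟩ with hCdef
      have hMT : MType A C :=
        ⟨x, y, x', y', v, z, hxy, hleafxA, hleafyA, hx'A, hy'A, hvA, hzA,
          hx'y', fun h => hx'N (h ▸ hvverts), fun h => hx'N (h ▸ hzN),
          fun h => hy'N (h ▸ hvverts), fun h => hy'N (h ▸ hzN), hzv.symm,
          rfl, fun a b => Iff.rfl⟩
      -- basic facts about C
      have hCx'out : ∀ b, ¬ C.adj x' b := by
        rintro b (h | ⟨hh, -⟩ | ⟨hh, -⟩ | ⟨hh, -⟩ | ⟨hh, -⟩ | ⟨hh, -⟩)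
        · exact hx'A (A.adj_mem x' b h).1
        · exact hxx' hh.symm
        · exact hxx' hh.symm
        · exact hyx' hh.symm
        · exact hyx' hh.symm
        · exact hx'N (hh ▸ hvverts)
      have hCy'out : ∀ b, ¬ C.adj y' b := by
        rintro b (h | ⟨hh, -⟩ | ⟨hh, -⟩ | ⟨hh, -⟩ | ⟨hh, -⟩ | ⟨hh, -⟩)
        · exact hy'A (A.adj_mem y' b h).1
        · exact hxy' hh.symm
        · exact hxy' hh.symm
        · exact hyy' hh.symm
        · exact hyy' hh.symm
        · exact hy'N (hh ▸ hvverts)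
      -- the first extinction  C → D
      have hpA : p ∈ A.verts := (hAV p).2 (Or.inr (Or.inr ⟨hpN, hpv, hpz⟩))
      have hqA : q ∈ A.verts := (hAV q).2 (Or.inr (Or.inr ⟨hqN, hqv, hqz⟩))
      have hmemD : ∀ w, w ∈ insert x' (insert y' (insert v (insert z A.verts))) →
          w ≠ x' → w ≠ x → w ∈ insert x' (insert y' (insert v (insert z A.verts))) \
            ({x', x} : Finset ℕ) := by
        intro w h1 h2 h3
        rw [Finset.mem_sdiff]
        refine ⟨h1, fun hmem => ?_⟩
        rcases Finset.mem_insert.1 hmem with h | h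
        · exact h2 h
        · exact h3 (Finset.mem_singleton.1 h)
      have hvfr := hfr v hvverts
      have hzfr := hfr z hzN
      have hqfr := hfr q hqN
      have hpfr := hfr p hpN
      have hDmem : ∀ a b : ℕ,
          ((C.adj a b ∧ a ≠ x ∧ b ≠ x ∧ b ≠ x') ∨ (a = p ∧ b = v)) →
          a ∈ C.verts \ {x', x} ∧ b ∈ C.verts \ {x', x} := by
        rintro a b (⟨h, hax, hbx, hbx'⟩ | ⟨ha, hb⟩)
        · have hax' : a ≠ x' := fun hh => hCx'out b (hh ▸ h)
          exact ⟨hmemD a (C.adj_mem a b h).1 hax' hax,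
            hmemD b (C.adj_mem a b h).2 hbx' hbx⟩
        · rw [ha, hb]
          exact ⟨hmemD p (hsubC p hpA) hpfr.2.2.1 hpfr.1, hmemD v hvC hvfr.2.2.1 hvfr.1⟩
      set D : PNet := ⟨C.verts \ {x', x},
        fun a b => (C.adj a b ∧ a ≠ x ∧ b ≠ x ∧ b ≠ x') ∨ (a = p ∧ b = v),
        fun a b => instDecidableOr, hDmem⟩ with hDdef
      have hE1 : Extinct C D :=
        ⟨x', x, v, ⟨hx'C, (outdeg_eq_zero_iff C x').2 hCx'out⟩,
          Or.inr (Or.inl ⟨rfl, rfl⟩), Or.inr (Or.inr (Or.inl ⟨rfl, rfl⟩)),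
          fun h => hx'N (h ▸ hvverts), Or.inr ⟨p, Or.inl (Or.inr (Or.inl ⟨rfl, rfl⟩)),
            rfl, fun u w => Iff.rfl⟩⟩
      -- facts about D
      have hDy'out : ∀ b, ¬ D.adj y' b := by
        rintro b (⟨h, -, -, -⟩ | ⟨hh, -⟩)
        · exact hCy'out b h
        · exact hy'N (hh ▸ hpN)
      -- the second extinction  D → N
      have hE2 : Extinct D N := by
        refine ⟨y', y, v, ⟨?_, (outdeg_eq_zero_iff D y').2 hDy'out⟩,
          Or.inl ⟨Or.inr (Or.inr (Or.inr (Or.inl ⟨rfl, rfl⟩))), hxy.symm, hxy'.symm,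
            hx'y'.symm⟩,
          Or.inl ⟨Or.inr (Or.inr (Or.inr (Or.inr (Or.inl ⟨rfl, rfl⟩)))), hxy.symm,
            hvfr.1, hvfr.2.2.1⟩,
          hvfr.2.2.2, Or.inr ⟨q, ?_, ?_, ?_⟩⟩
        · -- y' ∈ D.verts
          exact hmemD y' hy'C hx'y'.symm hxy'.symm
        · -- D.adj q y
          exact Or.inl ⟨Or.inl (Or.inr (Or.inr ⟨rfl, rfl⟩)), hqfr.1, hxy.symm, hyx'⟩
        · -- N.verts = D.verts \ {y', y}
          show N.verts =
            (insert x' (insert y' (insert v (insert z A.verts))) \ {x', x}) \ {y', y}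
          ext w
          simp only [Finset.mem_sdiff, Finset.mem_insert, Finset.mem_singleton, not_or, hAV]
          constructor
          · intro hw
            have hwfr := hfr w hw
            by_cases hwv : w = v
            · exact ⟨⟨Or.inr (Or.inr (Or.inl hwv)), hwfr.2.2.1, hwfr.1⟩,
                hwfr.2.2.2, hwfr.2.1⟩
            · by_cases hwz : w = z
              · exact ⟨⟨Or.inr (Or.inr (Or.inr (Or.inl hwz))), hwfr.2.2.1, hwfr.1⟩,
                  hwfr.2.2.2, hwfr.2.1⟩
              · exact ⟨⟨Or.inr (Or.inr (Or.inr (Or.inr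
                  (Or.inr (Or.inr ⟨hw, hwv, hwz⟩))))), hwfr.2.2.1, hwfr.1⟩,
                  hwfr.2.2.2, hwfr.2.1⟩
          · rintro ⟨⟨hw, hwx', hwx⟩, hwy', hwy⟩
            rcases hw with rfl | rfl | rfl | rfl | rfl | rfl | ⟨hwN, -, -⟩
            · exact absurd rfl hwx'
            · exact absurd rfl hwy'
            · exact hvverts
            · exact hzN
            · exact absurd rfl hwx
            · exact absurd rfl hwy
            · exact hwN
        · -- adjacency
          intro u w
          constructor
          · intro h
            have hufr := hfr u (adj_left h)
            have hwfr := hfr w (adj_right h)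
            by_cases hwv : w = v
            · subst hwv
              rcases hparex u h with rfl | rfl
              · exact Or.inl ⟨Or.inr ⟨rfl, rfl⟩, hufr.2.1, hvfr.2.1, hvfr.2.2.2⟩
              · exact Or.inr ⟨rfl, rfl⟩
            · by_cases huv : u = v
              · subst huv
                have hwz : w = z := hzuniq w h
                subst hwz
                exact Or.inl ⟨Or.inl ⟨Or.inr (Or.inr (Or.inr (Or.inr (Or.inr
                  ⟨rfl, rfl⟩)))), hvfr.1, hzfr.1, hzfr.2.2.1⟩,
                  hvfr.2.1, hzfr.2.1, hzfr.2.2.2⟩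
              · exact Or.inl ⟨Or.inl ⟨Or.inl (Or.inl ⟨h, huv, hwv⟩),
                  hufr.1, hwfr.1, hwfr.2.2.1⟩, hufr.2.1, hwfr.2.1, hwfr.2.2.2⟩
          · rintro (⟨hD, huy, hwy, hwy'⟩ | ⟨rfl, rfl⟩)
            · rcases hD with ⟨hC, hux, hwx, hwx'⟩ | ⟨rfl, rfl⟩
              · rcases hC with hA | ⟨rfl, rfl⟩ | ⟨rfl, rfl⟩ | ⟨rfl, rfl⟩ | ⟨rfl, rfl⟩ |
                  ⟨rfl, rfl⟩
                · rcases hA with ⟨h, -, -⟩ | ⟨rfl, rfl⟩ | ⟨rfl, rfl⟩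
                  · exact h
                  · exact absurd rfl hwx
                  · exact absurd rfl hwy
                · exact absurd rfl hwx'
                · exact absurd rfl hux
                · exact absurd rfl hwy'
                · exact absurd rfl huy
                · exact hz
              · exact hp
            · exact hq
      exact ⟨N₀, h0, ((hchain.tail (Or.inr (Or.inl hMT))).tail
        (Or.inr (Or.inr hE1))).tail (Or.inr (Or.inr hE2))⟩

    · exact absurd hvo hvout

open PNet in
/-- Any binary phylogenetic network can be generated (up to isomorphism) from
the single-leaf network by speciation, m-type hybrid-speciation, and extinction
events. -/
theorem stmt15 (N : PNet) (hbin : N.IsBinary) :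
    ∃ N₀ M, SingleLeaf N₀ ∧
      Relation.ReflTransGen
        (fun A B => Speciation A B ∨ MType A B ∨ Extinct A B) N₀ M ∧
      Iso M N := by
  obtain ⟨N₀, h0, hchain⟩ := gen_aux _ N le_rfl hbin
  exact ⟨N₀, N, h0, hchain, id, Set.bijOn_id _, fun _ _ _ _ => Iff.rfl⟩
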